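/- Let m ≥ 1 and let z_1 ≥ z_2 ≥ … ≥ z_m > 0 be a nonincreasing sequence of positive reals. For k ∈ {1,…,m} define ν_k = (k−1)/(∑_{j=1}^k z_j^{−1}), and let m* = max{ k ∈ {1,…,m} : z_k > ν_k } (this set contains k = 1, so m* is well defined). Set ν = ν_{m*} = (m*−1)/(∑_{j=1}^{m*} z_j^{−1}). Then: (i) for every f ≤ m*, 0 < 1 − ν/z_f ≤ 1; (ii) for every f with m* < f ≤ m, 1 − ν/z_f ≤ 0; and (iii) ∑_{f=1}^m max(1 − ν/z_f, 0) = 1, i.e., P*(f) = [1 − ν/z_f]^+ is a probability mass function supported exactly on {1,…,m*}. -/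

import Mathlib

/-- **The water-filling constant makes `P*` a pmf.**
Let `z 1 ≥ z 2 ≥ … ≥ z m > 0`, let `νk k = (k−1)/∑_{j=1}^k (z j)⁻¹`, let `m*` be the largest
`k ∈ {1,…,m}` with `z k > νk k` (the set contains `k = 1`), and set `ν = νk m*`.  Then
(i) `0 < 1 − ν / z f ≤ 1` for `f ≤ m*`; (ii) `1 − ν / z f ≤ 0` for `m* < f ≤ m`;
(iii) `∑_{f=1}^m [1 − ν / z f]⁺ = 1`, i.e. `P* f = [1 − ν / z f]⁺` is a pmf supported
exactly on `{1,…,m*}`. -/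
theorem waterfilling_pmf
    (m : ℕ) (hm : 1 ≤ m) (z : ℕ → ℝ)
    (hzpos : ∀ f, 1 ≤ f → f ≤ m → 0 < z f)
    (hzmono : ∀ i j, 1 ≤ i → i ≤ j → j ≤ m → z j ≤ z i)
    (νk : ℕ → ℝ)
    (hνk : ∀ k, νk k = ((k : ℝ) - 1) / ∑ j ∈ Finset.Icc 1 k, (z j)⁻¹)
    (mstar : ℕ)
    (hmem : mstar ∈ (Finset.Icc 1 m).filter fun k => νk k < z k)
    (hmax : ∀ k ∈ (Finset.Icc 1 m).filter fun k => νk k < z k, k ≤ mstar)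
    (ν : ℝ) (hν : ν = νk mstar) :
    (∀ f, 1 ≤ f → f ≤ mstar → 0 < 1 - ν / z f ∧ 1 - ν / z f ≤ 1) ∧
    (∀ f, mstar < f → f ≤ m → 1 - ν / z f ≤ 0) ∧
    (∑ f ∈ Finset.Icc 1 m, max (1 - ν / z f) 0 = 1) := by
  obtain ⟨hmem', hzm⟩ := Finset.mem_filter.mp hmem
  obtain ⟨h1m, hmm⟩ := Finset.mem_Icc.mp hmem'
  set S : ℕ → ℝ := fun k => ∑ j ∈ Finset.Icc 1 k, (z j)⁻¹ with hS
  have hSpos : ∀ k, 1 ≤ k → k ≤ m → 0 < S k := by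
    intro k hk1 hkm
    apply Finset.sum_pos
    · intro j hj
      rw [Finset.mem_Icc] at hj
      exact inv_pos.mpr (hzpos j hj.1 (hj.2.trans hkm))
    · exact ⟨1, Finset.mem_Icc.mpr ⟨le_refl 1, hk1⟩⟩
  have hνnn : 0 ≤ ν := by
    rw [hν, hνk]
    apply div_nonneg
    · have : (1:ℝ) ≤ mstar := by exact_mod_cast h1m
      linarith
    · exact (hSpos mstar h1m hmm).le
  -- main induction: for mstar ≤ f ≤ m, νk f ≤ ν and (mstar < f → z f ≤ ν)
  have key : ∀ f, mstar ≤ f → f ≤ m → νk f ≤ ν ∧ (mstar < f → z f ≤ ν) := by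
    intro f hf
    induction f, hf using Nat.le_induction with
    | base => intro _; exact ⟨le_of_eq hν.symm, fun h => absurd h (lt_irrefl _)⟩
    | succ k hk ih =>
      intro hk1m
      have hkm : k ≤ m := Nat.le_of_succ_le hk1m
      obtain ⟨ihν, _⟩ := ih hkm
      have hk1 : 1 ≤ k := le_trans h1m hk
      have hknot : ¬ νk (k+1) < z (k+1) := by
        intro h
        have := hmax (k+1) (Finset.mem_filter.mpr
          ⟨Finset.mem_Icc.mpr ⟨Nat.le_add_left 1 k, hk1m⟩, h⟩)
        omega
      push_neg at hknot
      have ha : 0 < z (k+1) := hzpos (k+1) (Nat.le_add_left 1 k) hk1m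
      have hs : 0 < S k := hSpos k hk1 hkm
      have hSsucc : S (k+1) = S k + (z (k+1))⁻¹ := by
        simp only [hS]
        rw [Finset.sum_Icc_succ_top (Nat.le_add_left 1 k)]
      have hνk1 : νk (k+1) = (k : ℝ) / (S k + (z (k+1))⁻¹) := by
        rw [hνk, ← hSsucc]; push_cast; ring_nf; rfl
      have hkcast : (1:ℝ) ≤ k := by exact_mod_cast hk1
      have hinv : (z (k+1))⁻¹ * z (k+1) = 1 := inv_mul_cancel₀ ha.ne'
      have hspos' : 0 < S k + (z (k+1))⁻¹ := by positivity
      -- from hknot : z (k+1) ≤ νk (k+1)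
      have h1 : z (k+1) * (S k + (z (k+1))⁻¹) ≤ k := by
        rw [hνk1] at hknot
        exact (le_div_iff₀ hspos').mp hknot
      have h2 : z (k+1) * S k ≤ (k:ℝ) - 1 := by nlinarith
      have hνkk : νk k = ((k:ℝ) - 1) / S k := by rw [hνk]
      have hz_le : z (k+1) ≤ νk k := by
        rw [hνkk, le_div_iff₀ hs]; exact h2
      have hν_le : νk (k+1) ≤ νk k := by
        rw [hνk1, hνkk, div_le_div_iff₀ hspos' hs]
        nlinarith [mul_le_mul_of_nonneg_left h2 (inv_nonneg.mpr ha.le)]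
      exact ⟨hν_le.trans ihν, fun _ => hz_le.trans ihν⟩
  -- (i)
  have part1 : ∀ f, 1 ≤ f → f ≤ mstar → 0 < 1 - ν / z f ∧ 1 - ν / z f ≤ 1 := by
    intro f hf1 hfm
    have hfm' : f ≤ m := hfm.trans hmm
    have hzf : 0 < z f := hzpos f hf1 hfm'
    have hνlt : ν < z f := by
      have : z mstar ≤ z f := hzmono f mstar hf1 hfm hmm
      rw [hν]; linarith
    constructor
    · have : ν / z f < 1 := (div_lt_one hzf).mpr hνlt
      linarith
    · have : 0 ≤ ν / z f := div_nonneg hνnn hzf.le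
      linarith
  have part2 : ∀ f, mstar < f → f ≤ m → 1 - ν / z f ≤ 0 := by
    intro f hf hfm
    have hzf : 0 < z f := hzpos f (le_trans h1m (le_of_lt hf)) hfm
    have : z f ≤ ν := (key f (le_of_lt hf) hfm).2 hf
    have : 1 ≤ ν / z f := (one_le_div hzf).mpr this
    linarith
  refine ⟨part1, part2, ?_⟩
  -- (iii)
  have hsplit : Finset.Icc 1 m = Finset.Icc 1 mstar ∪ Finset.Icc (mstar+1) m := by
    ext a; simp only [Finset.mem_Icc, Finset.mem_union]; omega
  have hdisj : Disjoint (Finset.Icc 1 mstar) (Finset.Icc (mstar+1) m) := by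
    simp only [Finset.disjoint_left, Finset.mem_Icc]
    intro a ha hb
    omega
  rw [hsplit, Finset.sum_union hdisj]
  have h2zero : ∑ f ∈ Finset.Icc (mstar+1) m, max (1 - ν / z f) 0 = 0 := by
    apply Finset.sum_eq_zero
    intro f hf
    rw [Finset.mem_Icc] at hf
    exact max_eq_right (part2 f hf.1 hf.2)
  rw [h2zero, add_zero]
  have h1eq : ∑ f ∈ Finset.Icc 1 mstar, max (1 - ν / z f) 0
      = ∑ f ∈ Finset.Icc 1 mstar, (1 - ν / z f) := by
    apply Finset.sum_congr rfl
    intro f hf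
    rw [Finset.mem_Icc] at hf
    exact max_eq_left (part1 f hf.1 hf.2).1.le
  rw [h1eq, Finset.sum_sub_distrib, Finset.sum_const, Nat.card_Icc]
  have hSm : 0 < S mstar := hSpos mstar h1m hmm
  have : ∑ f ∈ Finset.Icc 1 mstar, ν / z f = ν * S mstar := by
    rw [Finset.mul_sum]
    apply Finset.sum_congr rfl
    intro f _
    rw [div_eq_mul_inv]
  rw [this]
  have hνS : ν * S mstar = (mstar : ℝ) - 1 := by
    rw [hν, hνk, div_mul_cancel₀]
    exact hSm.ne'
  rw [hνS, Nat.add_sub_cancel, nsmul_eq_mul, mul_one]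
  ring
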